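/- Let u : ℝ × ℝ² → ℝ be a C³ (in space, C¹ in time) solution of the two-dimensional Zakharov–Kuznetsov equation ∂ₜu + ∂ₓ³u + ∂ₓ∂_y²u = ∂ₓ(u²). Define new variables x′ = 2^{−2/3}x + 2^{−2/3}·3^{1/2} y and y′ = 2^{−2/3}x − 2^{−2/3}·3^{1/2} y, and set v(t, x′, y′) = 2^{−2/3} u(t, x, y). Then v is a solution of the symmetric equation ∂ₜv + (∂_{x′}³ + ∂_{y′}³)v = (∂_{x′} + ∂_{y′})(v²). -/

import Mathlib

noncomputable section

/-- Partial derivative in the first spatial variable of a function on `ℝ²`. -/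
def pdx (f : ℝ × ℝ → ℝ) : ℝ × ℝ → ℝ := fun p => fderiv ℝ f p (1, 0)

/-- Partial derivative in the second spatial variable of a function on `ℝ²`. -/
def pdy (f : ℝ × ℝ → ℝ) : ℝ × ℝ → ℝ := fun p => fderiv ℝ f p (0, 1)

/-- Directional derivative in direction `w`. -/
def Dp (w : ℝ × ℝ) (f : ℝ × ℝ → ℝ) : ℝ × ℝ → ℝ := fun p => fderiv ℝ f p w

lemma pdx_eq : pdx = Dp (1, 0) := rfl
lemma pdy_eq : pdy = Dp (0, 1) := rfl

lemma contDiff_Dp {n : WithTop ℕ∞} {f : ℝ × ℝ → ℝ} (hf : ContDiff ℝ (n + 1) f) (w : ℝ × ℝ) :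
    ContDiff ℝ n (Dp w f) :=
  (hf.fderiv_right le_rfl).clm_apply contDiff_const

lemma Dp_swap {f : ℝ × ℝ → ℝ} (hf : ContDiff ℝ 2 f) (a b p : ℝ × ℝ) :
    Dp a (Dp b f) p = Dp b (Dp a f) p := by
  have hd' : Differentiable ℝ (fderiv ℝ f) :=
    (hf.fderiv_right (by norm_num : (1 : WithTop ℕ∞) + 1 ≤ 2)).differentiable one_ne_zero
  have key : ∀ w z : ℝ × ℝ, Dp w (Dp z f) p = fderiv ℝ (fderiv ℝ f) p w z := by
    intro w z
    rw [show Dp w (Dp z f) p = fderiv ℝ (fun q => (fderiv ℝ f q) z) p w from rfl,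
      fderiv_clm_apply (hd'.differentiableAt) (differentiableAt_const z)]
    simp
  rw [key, key]
  exact (hf.contDiffAt.isSymmSndFDerivAt (by norm_num)) a b

lemma Dp_comp {g : ℝ × ℝ → ℝ} {E : ℝ × ℝ →L[ℝ] ℝ × ℝ} {p : ℝ × ℝ}
    (hg : DifferentiableAt ℝ g (E p)) (c : ℝ) (w : ℝ × ℝ) :
    Dp w (fun q => c * g (E q)) p = c * Dp (E w) g (E p) := by
  have h1 : DifferentiableAt ℝ (fun q => g (E q)) p := hg.comp p E.differentiableAt
  have h2 : fderiv ℝ (fun q => g (E q)) p = (fderiv ℝ g (E p)).comp (E : ℝ × ℝ →L[ℝ] ℝ × ℝ) := by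
    rw [show (fun q => g (E q)) = g ∘ E from rfl, fderiv_comp p hg E.differentiableAt, E.fderiv]
  show fderiv ℝ (fun q => c * g (E q)) p w = _
  rw [fderiv_const_mul h1, h2]
  simp [Dp]

lemma Dp_dir' (f : ℝ × ℝ → ℝ) (p : ℝ × ℝ) (a b : ℝ) :
    Dp (a, b) f p = a * Dp (1, 0) f p + b * Dp (0, 1) f p := by
  have h : ((a, b) : ℝ × ℝ) = a • ((1 : ℝ), (0 : ℝ)) + b • ((0 : ℝ), (1 : ℝ)) := by
    simp [Prod.ext_iff]
  simp only [Dp, h, map_add, map_smul, smul_eq_mul]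

lemma Dp_dir (f : ℝ × ℝ → ℝ) (p : ℝ × ℝ) (a b : ℝ) :
    Dp (a, b) f p = a * pdx f p + b * pdy f p := Dp_dir' f p a b

lemma Dp_lin {g h : ℝ × ℝ → ℝ} {p : ℝ × ℝ} (hg : DifferentiableAt ℝ g p)
    (hh : DifferentiableAt ℝ h p) (a b : ℝ) (w : ℝ × ℝ) :
    Dp w (fun q => a * g q + b * h q) p = a * Dp w g p + b * Dp w h p := by
  show fderiv ℝ (fun q => a * g q + b * h q) p w = _
  rw [fderiv_fun_add ((hg.const_mul a)) ((hh.const_mul b)), fderiv_const_mul hg, fderiv_const_mul hh]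
  simp [Dp]

lemma Dp_triple {f : ℝ × ℝ → ℝ} (hf : ContDiff ℝ 3 f) (a b : ℝ) (p : ℝ × ℝ) :
    Dp (a, b) (Dp (a, b) (Dp (a, b) f)) p
      = a ^ 3 * pdx (pdx (pdx f)) p
        + a ^ 2 * b * (pdx (pdx (pdy f)) p + pdx (pdy (pdx f)) p + pdy (pdx (pdx f)) p)
        + a * b ^ 2 * (pdx (pdy (pdy f)) p + pdy (pdx (pdy f)) p + pdy (pdy (pdx f)) p)
        + b ^ 3 * pdy (pdy (pdy f)) p := by
  simp only [pdx_eq, pdy_eq]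
  have h2 : ∀ w : ℝ × ℝ, ContDiff ℝ 2 (Dp w f) := fun w =>
    contDiff_Dp (n := 2) (hf.of_le (by norm_num)) w
  have h1 : ∀ w w' : ℝ × ℝ, ContDiff ℝ 1 (Dp w (Dp w' f)) := fun w w' =>
    contDiff_Dp (n := 1) ((h2 w').of_le (by norm_num)) w
  have d2 : ∀ (w q : ℝ × ℝ), DifferentiableAt ℝ (Dp w f) q := fun w q =>
    ((h2 w).differentiable (by norm_num)).differentiableAt
  have d1 : ∀ (w w' q : ℝ × ℝ), DifferentiableAt ℝ (Dp w (Dp w' f)) q := fun w w' q =>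
    ((h1 w w').differentiable one_ne_zero).differentiableAt
  have e0 : Dp (a, b) f = fun q => a * Dp (1, 0) f q + b * Dp (0, 1) f q :=
    funext fun q => Dp_dir' f q a b
  have e1 : Dp (a, b) (Dp (a, b) f)
      = fun q => a * (a * Dp (1, 0) (Dp (1, 0) f) q + b * Dp (0, 1) (Dp (1, 0) f) q)
          + b * (a * Dp (1, 0) (Dp (0, 1) f) q + b * Dp (0, 1) (Dp (0, 1) f) q) := by
    funext q
    rw [e0, Dp_lin (d2 _ q) (d2 _ q) a b, Dp_dir' (Dp (1, 0) f) q a b,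
      Dp_dir' (Dp (0, 1) f) q a b]
  rw [e1]
  have dA : DifferentiableAt ℝ
      (fun q => a * Dp (1, 0) (Dp (1, 0) f) q + b * Dp (0, 1) (Dp (1, 0) f) q) p :=
    ((d1 (1,0) (1,0) p).const_mul a).add ((d1 (0,1) (1,0) p).const_mul b)
  have dB : DifferentiableAt ℝ
      (fun q => a * Dp (1, 0) (Dp (0, 1) f) q + b * Dp (0, 1) (Dp (0, 1) f) q) p :=
    ((d1 (1,0) (0,1) p).const_mul a).add ((d1 (0,1) (0,1) p).const_mul b)
  rw [Dp_lin dA dB a b, Dp_lin (d1 _ _ p) (d1 _ _ p) a b, Dp_lin (d1 _ _ p) (d1 _ _ p) a b,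
    Dp_dir' (Dp (1, 0) (Dp (1, 0) f)) p a b, Dp_dir' (Dp (0, 1) (Dp (1, 0) f)) p a b,
    Dp_dir' (Dp (1, 0) (Dp (0, 1) f)) p a b, Dp_dir' (Dp (0, 1) (Dp (0, 1) f)) p a b]
  ring

theorem ZK_symmetrization (u v : ℝ → ℝ × ℝ → ℝ)
    (hu_time : ∀ p : ℝ × ℝ, ContDiff ℝ 1 fun t => u t p)
    (hu_space : ∀ t : ℝ, ContDiff ℝ 3 (u t))
    (hu_eq : ∀ (t : ℝ) (p : ℝ × ℝ),
      deriv (fun s => u s p) t + pdx (pdx (pdx (u t))) p + pdx (pdy (pdy (u t))) p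
        = pdx (fun q => (u t q) ^ 2) p)
    (hv : ∀ (t x y : ℝ),
      v t ((2:ℝ) ^ (-(2:ℝ)/3) * x + (2:ℝ) ^ (-(2:ℝ)/3) * Real.sqrt 3 * y,
           (2:ℝ) ^ (-(2:ℝ)/3) * x - (2:ℝ) ^ (-(2:ℝ)/3) * Real.sqrt 3 * y)
        = (2:ℝ) ^ (-(2:ℝ)/3) * u t (x, y)) :
    ∀ (t : ℝ) (p : ℝ × ℝ),
      deriv (fun s => v s p) t + pdx (pdx (pdx (v t))) p + pdy (pdy (pdy (v t))) p
        = pdx (fun q => (v t q) ^ 2) p + pdy (fun q => (v t q) ^ 2) p := by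
  intro t p
  set c : ℝ := (2:ℝ) ^ (-(2:ℝ)/3) with hc_def
  set α : ℝ := (2:ℝ) ^ (-(1:ℝ)/3) with hα_def
  set β : ℝ := α / Real.sqrt 3 with hβ_def
  have h3pos : (0:ℝ) < Real.sqrt 3 := Real.sqrt_pos.mpr (by norm_num)
  have h3ne : Real.sqrt 3 ≠ 0 := ne_of_gt h3pos
  have hsq3 : Real.sqrt 3 ^ 2 = 3 := Real.sq_sqrt (by norm_num)
  have hcα : c * α = 1/2 := by
    rw [hc_def, hα_def, ← Real.rpow_add (by norm_num)]
    norm_num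
  have hα3 : α ^ 3 = 1/2 := by
    rw [hα_def, ← Real.rpow_natCast ((2:ℝ) ^ (-(1:ℝ)/3)) 3, ← Real.rpow_mul (by norm_num)]
    norm_num
  have hβ2 : β ^ 2 = α ^ 2 / 3 := by
    rw [hβ_def, div_pow, hsq3]
  have hβ' : Real.sqrt 3 * β = α := by
    rw [hβ_def]; field_simp
  -- the linear change of variables
  set E : ℝ × ℝ →L[ℝ] ℝ × ℝ :=
    ((α • (ContinuousLinearMap.fst ℝ ℝ ℝ + ContinuousLinearMap.snd ℝ ℝ ℝ)).prod
      (β • (ContinuousLinearMap.fst ℝ ℝ ℝ - ContinuousLinearMap.snd ℝ ℝ ℝ))) with hE_def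
  have hE : ∀ q : ℝ × ℝ, E q = (α * (q.1 + q.2), β * (q.1 - q.2)) := by
    intro q
    simp [hE_def, smul_eq_mul, Prod.ext_iff]
    ring_nf
  have hEx : E ((1:ℝ), (0:ℝ)) = (α, β) := by rw [hE]; norm_num
  have hEy : E ((0:ℝ), (1:ℝ)) = (α, -β) := by rw [hE]; norm_num
  -- v is determined by u
  have hv' : ∀ (s : ℝ) (q : ℝ × ℝ), v s q = c * u s (E q) := by
    intro s q
    have h := hv s (α * (q.1 + q.2)) (β * (q.1 - q.2))
    rw [hE]
    rw [← h]
    congr 1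
    have h1 : c * (α * (q.1 + q.2)) + c * Real.sqrt 3 * (β * (q.1 - q.2)) = q.1 := by
      linear_combination (q.1 + q.2) * hcα + c * (q.1 - q.2) * hβ' + (q.1 - q.2) * hcα
    have h2 : c * (α * (q.1 + q.2)) - c * Real.sqrt 3 * (β * (q.1 - q.2)) = q.2 := by
      linear_combination (q.1 + q.2) * hcα - c * (q.1 - q.2) * hβ' - (q.1 - q.2) * hcα
    exact Prod.ext h1.symm h2.symm
  set f : ℝ × ℝ → ℝ := u t with hf_def
  have hf3 : ContDiff ℝ 3 f := hu_space t
  have hfd : Differentiable ℝ f := hf3.differentiable (by norm_num)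
  have h2 : ∀ w : ℝ × ℝ, ContDiff ℝ 2 (Dp w f) := fun w =>
    contDiff_Dp (n := 2) (hf3.of_le (by norm_num)) w
  have h1 : ∀ w w' : ℝ × ℝ, ContDiff ℝ 1 (Dp w (Dp w' f)) := fun w w' =>
    contDiff_Dp (n := 1) ((h2 w').of_le (by norm_num)) w
  have hvt : v t = fun q => c * f (E q) := funext fun q => hv' t q
  -- first spatial derivatives of v
  have hP : ∀ q : ℝ × ℝ, pdx (v t) q = c * Dp (α, β) f (E q) := by
    intro q
    rw [pdx_eq, hvt, Dp_comp hfd.differentiableAt c, hEx]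
  have hQ : ∀ q : ℝ × ℝ, pdy (v t) q = c * Dp (α, -β) f (E q) := by
    intro q
    rw [pdy_eq, hvt, Dp_comp hfd.differentiableAt c, hEy]
  -- third derivatives
  have hP3 : pdx (pdx (pdx (v t))) p = c * Dp (α, β) (Dp (α, β) (Dp (α, β) f)) (E p) := by
    have s1 : pdx (v t) = fun q => c * Dp (α, β) f (E q) := funext hP
    have s2 : pdx (pdx (v t)) = fun q => c * Dp (α, β) (Dp (α, β) f) (E q) := by
      funext q
      rw [s1, pdx_eq, Dp_comp (((h2 _).differentiable (by norm_num)).differentiableAt) c, hEx]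
    rw [s2, pdx_eq, Dp_comp (((h1 _ _).differentiable one_ne_zero).differentiableAt) c, hEx]
  have hQ3 : pdy (pdy (pdy (v t))) p = c * Dp (α, -β) (Dp (α, -β) (Dp (α, -β) f)) (E p) := by
    have s1 : pdy (v t) = fun q => c * Dp (α, -β) f (E q) := funext hQ
    have s2 : pdy (pdy (v t)) = fun q => c * Dp (α, -β) (Dp (α, -β) f) (E q) := by
      funext q
      rw [s1, pdy_eq, Dp_comp (((h2 _).differentiable (by norm_num)).differentiableAt) c, hEy]
    rw [s2, pdy_eq, Dp_comp (((h1 _ _).differentiable one_ne_zero).differentiableAt) c, hEy]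
  -- time derivative
  have hT : deriv (fun s => v s p) t = c * deriv (fun s => u s (E p)) t := by
    have : (fun s => v s p) = fun s => c * u s (E p) := funext fun s => hv' s p
    rw [this, deriv_const_mul c (((hu_time (E p)).differentiable one_ne_zero).differentiableAt)]
  -- the squared terms
  set g : ℝ × ℝ → ℝ := fun q => (f q) ^ 2 with hg_def
  have hgd : Differentiable ℝ g := fun q => ((hfd q).pow 2)
  have hsq : (fun q => (v t q) ^ 2) = fun q => c ^ 2 * g (E q) := by
    funext q
    rw [hv' t q, hg_def]
    ring
  have hRx : pdx (fun q => (v t q) ^ 2) p = c ^ 2 * Dp (α, β) g (E p) := by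
    rw [pdx_eq, hsq, Dp_comp hgd.differentiableAt (c ^ 2), hEx]
  have hRy : pdy (fun q => (v t q) ^ 2) p = c ^ 2 * Dp (α, -β) g (E p) := by
    rw [pdy_eq, hsq, Dp_comp hgd.differentiableAt (c ^ 2), hEy]
  -- symmetry of mixed partials
  have hsym2 : ∀ (h : ℝ × ℝ → ℝ), ContDiff ℝ 2 h → ∀ q, pdx (pdy h) q = pdy (pdx h) q := by
    intro h hh q
    rw [pdx_eq, pdy_eq]
    exact Dp_swap hh _ _ q
  have hsymf : pdy (pdx f) = pdx (pdy f) :=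
    funext fun q => (hsym2 f (hf3.of_le (by norm_num)) q).symm
  have hs1 : pdy (pdx (pdy f)) (E p) = pdx (pdy (pdy f)) (E p) := by
    rw [pdx_eq, pdy_eq]
    exact Dp_swap (h2 _) _ _ (E p)
  have hs2 : pdy (pdy (pdx f)) (E p) = pdx (pdy (pdy f)) (E p) := by
    rw [hsymf]
    exact hs1
  have hs3 : pdx (pdy (pdx f)) (E p) = pdx (pdx (pdy f)) (E p) := by rw [hsymf]
  have hs4 : pdy (pdx (pdx f)) (E p) = pdx (pdx (pdy f)) (E p) := by
    have step1 : pdy (pdx (pdx f)) (E p) = pdx (pdy (pdx f)) (E p) := by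
      rw [pdx_eq, pdy_eq]
      exact Dp_swap (h2 _) _ _ (E p)
    rw [step1, hsymf]
  -- assemble
  rw [hT, hP3, hQ3, hRx, hRy, Dp_triple hf3 α β (E p), Dp_triple hf3 α (-β) (E p),
    show Dp (α, β) g (E p) = α * pdx g (E p) + β * pdy g (E p) from Dp_dir g (E p) α β,
    show Dp (α, -β) g (E p) = α * pdx g (E p) + (-β) * pdy g (E p) from Dp_dir g (E p) α (-β),
    hs1, hs2, hs3, hs4]
  have hu := hu_eq t (E p)
  rw [← hf_def] at hu
  have hg_eq : pdx g (E p) = pdx (fun q => (f q) ^ 2) (E p) := rfl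
  rw [hg_eq]
  linear_combination c * hu + 2 * c * (pdx (pdx (pdx f)) (E p)) * hα3
    + 6 * c * α * (pdx (pdy (pdy f)) (E p)) * hβ2
    + 2 * c * (pdx (pdy (pdy f)) (E p)) * hα3
    - 2 * c * (pdx (fun q => (f q) ^ 2) (E p)) * hcα
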